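/- Let (k_j)_{j≥1} be a sequence of even natural numbers with k_1 ≥ 6 and k_{j+1} - k_j ≥ 6 for all j. Define a_0 = a_1 = 1, a_k = 2 if k = k_j or k = k_j + 2 for some j, and a_k = 4 otherwise. Then for the convergents s_k/t_k of [a_0,a_1,...], all t_k are odd and the Jacobi symbol (s_k/t_k) equals -1 if k = k_j for some j, and equals 1 otherwise. -/
import Mathlib


/-- Numerators of continued fraction convergents: `cfS a k = s_k`
(with `s_{-1} = 1`, `s_0 = a_0`, `s_k = a_k s_{k-1} + s_{k-2}`). -/
def cfS (a : ℕ → ℤ) : ℕ → ℤ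
  | 0 => a 0
  | 1 => a 1 * a 0 + 1
  | (k+2) => a (k+2) * cfS a (k+1) + cfS a k

/-- Denominators of continued fraction convergents: `cfT a k = t_k`
(with `t_{-1} = 0`, `t_0 = 1`, `t_k = a_k t_{k-1} + t_{k-2}`). -/
def cfT (a : ℕ → ℤ) : ℕ → ℤ
  | 0 => 1
  | 1 => a 1
  | (k+2) => a (k+2) * cfT a (k+1) + cfT a k

theorem jacobi_sequence_minus_one_at_kj_construction
    (kseq : ℕ → ℕ) (heven : ∀ j, 1 ≤ j → Even (kseq j)) (h1 : 6 ≤ kseq 1)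
    (hgap : ∀ j, 1 ≤ j → kseq j + 6 ≤ kseq (j+1))
    (a : ℕ → ℤ) (ha0 : a 0 = 1) (ha1 : a 1 = 1)
    (ha2 : ∀ n, 2 ≤ n → (∃ j, 1 ≤ j ∧ (n = kseq j ∨ n = kseq j + 2)) → a n = 2)
    (ha4 : ∀ n, 2 ≤ n → ¬(∃ j, 1 ≤ j ∧ (n = kseq j ∨ n = kseq j + 2)) → a n = 4) :
    ∀ n, Odd (cfT a n) ∧
      ((∃ j, 1 ≤ j ∧ n = kseq j) → jacobiSym (cfS a n) (cfT a n).natAbs = -1) ∧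
      (¬(∃ j, 1 ≤ j ∧ n = kseq j) → jacobiSym (cfS a n) (cfT a n).natAbs = 1) := by
  -- monotonicity and separation of kseq
  have mono : ∀ i j, 1 ≤ i → i < j → kseq i + 6 ≤ kseq j := by
    intro i j hi hij
    induction j with
    | zero => omega
    | succ j ih =>
      rcases Nat.lt_succ_iff_lt_or_eq.mp hij with h | h
      · have hg := hgap j (by omega)
        have h2 := ih h
        omega
      · subst h; exact hgap i hi
  have hsep : ∀ i j, 1 ≤ i → 1 ≤ j → i ≠ j →
      kseq i + 6 ≤ kseq j ∨ kseq j + 6 ≤ kseq i := by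
    intro i j hi hj hij
    rcases lt_or_gt_of_ne hij with h | h
    · exact Or.inl (mono i j hi h)
    · exact Or.inr (mono j i hj h)
  have hge6 : ∀ j, 1 ≤ j → 6 ≤ kseq j := by
    intro j hj
    rcases eq_or_lt_of_le hj with h | h
    · rw [← h]; exact h1
    · have := mono 1 j le_rfl h; omega
  -- positivity of a
  have a_pos : ∀ n, 1 ≤ a n := by
    intro n
    match n with
    | 0 => simp [ha0]
    | 1 => simp [ha1]
    | (m+2) =>
      by_cases h : ∃ j, 1 ≤ j ∧ (m+2 = kseq j ∨ m+2 = kseq j + 2)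
      · rw [ha2 _ (by omega) h]; norm_num
      · rw [ha4 _ (by omega) h]; norm_num
  -- positivity of t
  have Tpos : ∀ n, 0 < cfT a n := by
    have key : ∀ n, 0 < cfT a n ∧ 0 < cfT a (n+1) := by
      intro n
      induction n with
      | zero => constructor <;> simp [cfT, ha1]
      | succ n ih =>
        refine ⟨ih.2, ?_⟩
        have h1 := a_pos (n+2)
        have h2 := ih.1
        have h3 := ih.2
        show 0 < a (n+2) * cfT a (n+1) + cfT a n
        nlinarith
    exact fun n => (key n).1
  -- mod 4 behaviour of t
  have T4 : ∀ n, ((∃ j, 1 ≤ j ∧ n = kseq j) → cfT a n % 4 = 3) ∧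
      ((¬∃ j, 1 ≤ j ∧ n = kseq j) → cfT a n % 4 = 1) := by
    have key : ∀ n,
        (((∃ j, 1 ≤ j ∧ n = kseq j) → cfT a n % 4 = 3) ∧
          ((¬∃ j, 1 ≤ j ∧ n = kseq j) → cfT a n % 4 = 1)) ∧
        (((∃ j, 1 ≤ j ∧ n+1 = kseq j) → cfT a (n+1) % 4 = 3) ∧
          ((¬∃ j, 1 ≤ j ∧ n+1 = kseq j) → cfT a (n+1) % 4 = 1)) := by
      intro n
      induction n with
      | zero =>
        have h0 : ¬∃ j, 1 ≤ j ∧ 0 = kseq j := by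
          rintro ⟨j, hj, he⟩; have := hge6 j hj; omega
        have h1' : ¬∃ j, 1 ≤ j ∧ 1 = kseq j := by
          rintro ⟨j, hj, he⟩; have := hge6 j hj; omega
        refine ⟨⟨fun h => absurd h h0, fun _ => ?_⟩,
          ⟨fun h => absurd h h1', fun _ => ?_⟩⟩
        · show cfT a 0 % 4 = 1; simp [cfT]
        · show cfT a 1 % 4 = 1; simp [cfT, ha1]
      | succ n ih =>
        refine ⟨ih.2, ?_⟩
        have ht1 : cfT a (n+1) % 4 = 1 ∨ cfT a (n+1) % 4 = 3 := by
          by_cases h : ∃ j, 1 ≤ j ∧ n+1 = kseq j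
          · exact Or.inr (ih.2.1 h)
          · exact Or.inl (ih.2.2 h)
        have heq : cfT a (n+2) = a (n+2) * cfT a (n+1) + cfT a n := rfl
        by_cases h2 : ∃ j, 1 ≤ j ∧ (n+2 = kseq j ∨ n+2 = kseq j + 2)
        · have hav : a (n+2) = 2 := ha2 _ (by omega) h2
          obtain ⟨j, hj, hc⟩ := h2
          rcases hc with hc | hc
          · -- n+2 = kseq j
            have hn0 : ¬∃ i, 1 ≤ i ∧ n = kseq i := by
              rintro ⟨i, hi, he⟩
              by_cases hij : i = j
              · subst hij; omega
              · rcases hsep i j hi hj hij with h | h <;> omega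
            have ht0 : cfT a n % 4 = 1 := ih.1.2 hn0
            refine ⟨fun _ => ?_, fun h => absurd ⟨j, hj, hc⟩ h⟩
            rw [heq, hav]; omega
          · -- n+2 = kseq j + 2, so n = kseq j
            have ht0 : cfT a n % 4 = 3 := ih.1.1 ⟨j, hj, by omega⟩
            have hne : ¬∃ i, 1 ≤ i ∧ n+2 = kseq i := by
              rintro ⟨i, hi, he⟩
              by_cases hij : i = j
              · subst hij; omega
              · rcases hsep i j hi hj hij with h | h <;> omega
            refine ⟨fun h => absurd h hne, fun _ => ?_⟩
            rw [heq, hav]; omega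
        · have hav : a (n+2) = 4 := ha4 _ (by omega) h2
          have hn0 : ¬∃ i, 1 ≤ i ∧ n = kseq i := by
            rintro ⟨i, hi, he⟩
            exact h2 ⟨i, hi, Or.inr (by omega)⟩
          have ht0 : cfT a n % 4 = 1 := ih.1.2 hn0
          have hne : ¬∃ i, 1 ≤ i ∧ n+2 = kseq i := by
            rintro ⟨i, hi, he⟩
            exact h2 ⟨i, hi, Or.inl he⟩
          refine ⟨fun h => absurd h hne, fun _ => ?_⟩
          rw [heq, hav]; omega
    exact fun n => (key n).1
  have Tmod : ∀ n, cfT a n % 4 = 1 ∨ cfT a n % 4 = 3 := by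
    intro n
    by_cases h : ∃ j, 1 ≤ j ∧ n = kseq j
    · exact Or.inr ((T4 n).1 h)
    · exact Or.inl ((T4 n).2 h)
  have hcast : ∀ n, ((cfT a n).natAbs : ℤ) = cfT a n :=
    fun n => Int.natAbs_of_nonneg (Tpos n).le
  have Toddn : ∀ n, Odd (cfT a n).natAbs := by
    intro n
    have h := hcast n
    rcases Tmod n with h4 | h4 <;> (rw [Nat.odd_iff]; omega)
  -- J(t_n | t_{n+1}) = 1 always
  have U : ∀ n, jacobiSym (cfT a n) (cfT a (n+1)).natAbs = 1 := by
    intro n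
    induction n with
    | zero =>
      have : cfT a 1 = 1 := by simp [cfT, ha1]
      have h0 : cfT a 0 = 1 := rfl
      rw [h0, this]
      exact jacobiSym.one_left 1
    | succ n ih =>
      have heq : cfT a (n+2) = a (n+2) * cfT a (n+1) + cfT a n := rfl
      have hrec : jacobiSym (cfT a (n+1)) (cfT a (n+2)).natAbs
          = jacobiSym (cfT a (n+2)) (cfT a (n+1)).natAbs := by
        rw [← hcast (n+1), ← hcast (n+2)]
        rcases Tmod (n+1) with h4 | h4
        · have hm : (cfT a (n+1)).natAbs % 4 = 1 := by have := hcast (n+1); omega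
          exact jacobiSym.quadratic_reciprocity_one_mod_four hm (Toddn (n+2))
        · -- then t_{n+2} % 4 = 1
          have hx : ∃ j, 1 ≤ j ∧ n+1 = kseq j := by
            by_contra h
            have := (T4 (n+1)).2 h; omega
          obtain ⟨j, hj, he⟩ := hx
          have hne : ¬∃ i, 1 ≤ i ∧ n+2 = kseq i := by
            rintro ⟨i, hi, he2⟩
            by_cases hij : i = j
            · subst hij; omega
            · rcases hsep i j hi hj hij with h | h <;> omega
          have h42 : cfT a (n+2) % 4 = 1 := (T4 (n+2)).2 hne
          have hm : (cfT a (n+2)).natAbs % 4 = 1 := by have := hcast (n+2); omega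
          exact jacobiSym.quadratic_reciprocity_one_mod_four' (Toddn (n+1)) hm
      rw [hrec]
      have hmod : cfT a (n+2) % ((cfT a (n+1)).natAbs : ℤ)
          = cfT a n % ((cfT a (n+1)).natAbs : ℤ) := by
        rw [hcast (n+1), heq, add_comm, mul_comm, Int.add_mul_emod_self_left]
      rw [jacobiSym.mod_left' hmod]
      exact ih
  -- determinant identity
  have D : ∀ n, cfS a (n+1) * cfT a n - cfT a (n+1) * cfS a n = (-1 : ℤ)^n := by
    intro n
    induction n with
    | zero =>
      show (a 1 * a 0 + 1) * 1 - a 1 * a 0 = (-1 : ℤ)^0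
      ring
    | succ n ih =>
      show (a (n+2) * cfS a (n+1) + cfS a n) * cfT a (n+1)
          - (a (n+2) * cfT a (n+1) + cfT a n) * cfS a (n+1) = (-1 : ℤ)^(n+1)
      have : (-1 : ℤ)^(n+1) = -(-1 : ℤ)^n := by ring
      rw [this]
      linear_combination (-1 : ℤ) * ih
  -- main conclusion
  intro n
  refine ⟨?_, ?_⟩
  · rcases Tmod n with h | h <;> (rw [Int.odd_iff]; omega)
  match n with
  | 0 =>
    have h0 : ¬∃ j, 1 ≤ j ∧ 0 = kseq j := by
      rintro ⟨j, hj, he⟩; have := hge6 j hj; omega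
    refine ⟨fun h => absurd h h0, fun _ => ?_⟩
    show jacobiSym (a 0) (cfT a 0).natAbs = 1
    have : (cfT a 0).natAbs = 1 := rfl
    rw [ha0, this]
    exact jacobiSym.one_left 1
  | (m+1) =>
    have hD := D m
    have hmod : cfS a (m+1) * cfT a m % ((cfT a (m+1)).natAbs : ℤ)
        = ((-1 : ℤ)^m) % ((cfT a (m+1)).natAbs : ℤ) := by
      have he : cfS a (m+1) * cfT a m = (-1 : ℤ)^m + cfT a (m+1) * cfS a m := by
        linarith [hD]
      rw [he, hcast (m+1), Int.add_mul_emod_self_left]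
    have h2 := jacobiSym.mod_left' hmod
    rw [jacobiSym.mul_left, U m, mul_one] at h2
    -- h2 : J(s_{m+1} | t_{m+1}) = J((-1)^m | t_{m+1})
    rcases Nat.even_or_odd m with hm | hm
    · -- n = m+1 odd, result 1
      have : ((-1 : ℤ))^m = 1 := hm.neg_one_pow
      rw [this, jacobiSym.one_left] at h2
      have hne : ¬∃ j, 1 ≤ j ∧ m+1 = kseq j := by
        rintro ⟨j, hj, he⟩
        have := heven j hj
        rw [← he] at this
        rcases this with ⟨r, hr⟩
        rcases hm with ⟨s, hs⟩
        omega
      exact ⟨fun h => absurd h hne, fun _ => h2⟩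
    · have : ((-1 : ℤ))^m = -1 := hm.neg_one_pow
      rw [this, jacobiSym.at_neg_one (Toddn (m+1))] at h2
      constructor
      · intro hx
        have h43 : cfT a (m+1) % 4 = 3 := (T4 (m+1)).1 hx
        have h43' : (cfT a (m+1)).natAbs % 4 = 3 := by have := hcast (m+1); omega
        have ho := Nat.odd_iff.mp (Toddn (m+1))
        rw [h2, ZMod.χ₄_nat_eq_if_mod_four, h43', if_neg (by omega)]
        norm_num
      · intro hx
        have h41 : cfT a (m+1) % 4 = 1 := (T4 (m+1)).2 hx
        have h41' : (cfT a (m+1)).natAbs % 4 = 1 := by have := hcast (m+1); omega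
        have ho := Nat.odd_iff.mp (Toddn (m+1))
        rw [h2, ZMod.χ₄_nat_eq_if_mod_four, h41', if_neg (by omega)]
        norm_num
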